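/- Let φ, ψ be two higher spin Killing spinors on a Riemannian spin manifold with the same real Killing number μ. Then the symmetric (0,m)-tensor K(X₁,…,X_m) := Re⟨p_j(X₁)⊙⋯⊙p_j(X_m)φ, ψ⟩ (symmetrized product of Clifford homomorphisms) is a Killing tensor: the complete symmetrization of ∇K vanishes, i.e. Σ_{σ∈𝔖_{m+1}} (∇_{X_{σ(0)}}K)(X_{σ(1)},…,X_{σ(m)}) = 0 for all vector fields X₀,…,X_m. -/

import Mathlib

open scoped ComplexInnerProductSpace

private lemma foldr_comp_eq {W : Type*} [AddCommMonoid W] [Module ℂ W]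
    (l : List (W →ₗ[ℂ] W)) (g : W →ₗ[ℂ] W) :
    l.foldr (· ∘ₗ ·) g = (l.foldr (· ∘ₗ ·) LinearMap.id) ∘ₗ g := by
  induction l with
  | nil => simp
  | cons a t ih => simp [ih, LinearMap.comp_assoc]

private lemma sum_comp' {W : Type*} [AddCommMonoid W] [Module ℂ W] {ι : Type*}
    (s : Finset ι) (f : ι → (W →ₗ[ℂ] W)) (g : W →ₗ[ℂ] W) :
    (∑ i ∈ s, f i) ∘ₗ g = ∑ i ∈ s, (f i ∘ₗ g) := by
  ext w; simp

private lemma comp_sum' {W : Type*} [AddCommMonoid W] [Module ℂ W] {ι : Type*}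
    (s : Finset ι) (f : ι → (W →ₗ[ℂ] W)) (g : W →ₗ[ℂ] W) :
    g ∘ₗ (∑ i ∈ s, f i) = ∑ i ∈ s, (g ∘ₗ f i) := by
  ext w; simp

/-- For two higher spin Killing spinors `φ, ψ` with the same real Killing number `μ`, the
symmetric `(0,m)`-tensor `K(X₁,…,X_m) = Re⟨p_j(X₁)⊙⋯⊙p_j(X_m)φ, ψ⟩` is a Killing tensor:
its completely symmetrized covariant derivative vanishes.  The statement is pointwise: at
the point, `symProd X` is the symmetrized product `(1/m!)Σ_τ p_j(X_{τ(1)})⋯p_j(X_{τ(m)})`,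
the Clifford homomorphisms `p_j(X)` are skew-adjoint, and the Leibniz rule `hleibniz`
expresses `(∇_Y K)(X₁,…,X_m)` via the Killing equation `∇_Y φ = μ p_j(Y) φ` (and likewise
for `ψ`). -/
theorem killing_spinors_give_killing_tensor (n m : ℕ) (W : Type*) [NormedAddCommGroup W]
    [InnerProductSpace ℂ W] [FiniteDimensional ℂ W]
    (p : EuclideanSpace ℝ (Fin n) →ₗ[ℝ] (W →ₗ[ℂ] W))
    (hskew : ∀ X, LinearMap.adjoint (p X) = -(p X))
    (μ : ℝ) (φ ψ : W)
    (symProd : (Fin m → EuclideanSpace ℝ (Fin n)) → W →ₗ[ℂ] W)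
    (hsym : ∀ X, symProd X = ((m.factorial : ℂ))⁻¹ •
      ∑ τ : Equiv.Perm (Fin m),
        (List.ofFn fun i => p (X (τ i))).foldr (· ∘ₗ ·) LinearMap.id)
    (nablaK : EuclideanSpace ℝ (Fin n) → (Fin m → EuclideanSpace ℝ (Fin n)) → ℝ)
    (hleibniz : ∀ Y X, nablaK Y X
      = (⟪symProd X ((μ : ℂ) • p Y φ), ψ⟫).re + (⟪symProd X φ, (μ : ℂ) • p Y ψ⟫).re) :
    ∀ X : Fin (m + 1) → EuclideanSpace ℝ (Fin n),
      ∑ σ : Equiv.Perm (Fin (m + 1)),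
        nablaK (X (σ 0)) (fun i => X (σ i.succ)) = 0 := by
  intro X
  classical
  set F : Equiv.Perm (Fin (m + 1)) → (W →ₗ[ℂ] W) := fun g =>
    (List.ofFn fun i : Fin (m + 1) => p (X (g i))).foldr (· ∘ₗ ·) LinearMap.id with hF
  -- the key operator identity
  have hzero : ∑ σ : Equiv.Perm (Fin (m + 1)),
      ((symProd fun i => X (σ i.succ)) ∘ₗ p (X (σ 0))
        - p (X (σ 0)) ∘ₗ (symProd fun i => X (σ i.succ))) = 0 := by
    have claim1 : ∀ τ : Equiv.Perm (Fin m),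
        ∑ σ : Equiv.Perm (Fin (m + 1)),
          ((List.ofFn fun i : Fin m => p (X (σ (τ i).succ))).foldr (· ∘ₗ ·) LinearMap.id)
            ∘ₗ p (X (σ 0)) = ∑ ρ : Equiv.Perm (Fin (m + 1)), F ρ := by
      intro τ
      set e : Equiv.Perm (Fin (m + 1)) :=
        (finSuccEquivLast.trans (Equiv.optionCongr τ)).trans (finSuccEquiv m).symm with he
      refine Fintype.sum_equiv (Equiv.mulRight e) _ _ ?_
      intro σ
      have h1 : ∀ i : Fin m, (σ * e) i.castSucc = σ (τ i).succ := by
        intro i; simp [he, Equiv.Perm.mul_apply]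
      have h2 : (σ * e) (Fin.last m) = σ 0 := by
        simp [he, Equiv.Perm.mul_apply]
      show _ = F (σ * e)
      rw [hF]
      simp only []
      rw [List.ofFn_succ' (fun i : Fin (m + 1) => p (X ((σ * e) i)))]
      simp only [h1, h2, List.concat_eq_append, List.foldr_append, List.foldr_cons,
        List.foldr_nil, LinearMap.comp_id]
      conv_rhs => rw [foldr_comp_eq]
    have claim2 : ∀ τ : Equiv.Perm (Fin m),
        ∑ σ : Equiv.Perm (Fin (m + 1)),
          p (X (σ 0)) ∘ₗ
            ((List.ofFn fun i : Fin m => p (X (σ (τ i).succ))).foldr (· ∘ₗ ·) LinearMap.id)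
            = ∑ ρ : Equiv.Perm (Fin (m + 1)), F ρ := by
      intro τ
      set e : Equiv.Perm (Fin (m + 1)) :=
        ((finSuccEquiv m).trans (Equiv.optionCongr τ)).trans (finSuccEquiv m).symm with he
      refine Fintype.sum_equiv (Equiv.mulRight e) _ _ ?_
      intro σ
      have h1 : ∀ i : Fin m, (σ * e) i.succ = σ (τ i).succ := by
        intro i; simp [he, Equiv.Perm.mul_apply]
      have h2 : (σ * e) 0 = σ 0 := by
        simp [he, Equiv.Perm.mul_apply]
      show _ = F (σ * e)
      rw [hF]
      simp only []
      rw [List.ofFn_succ (f := fun i : Fin (m + 1) => p (X ((σ * e) i)))]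
      simp only [h1, h2, List.foldr_cons]
    -- now expand symProd and combine
    have expand : ∀ σ : Equiv.Perm (Fin (m + 1)),
        ((symProd fun i => X (σ i.succ)) ∘ₗ p (X (σ 0))
          - p (X (σ 0)) ∘ₗ (symProd fun i => X (σ i.succ)))
        = ((m.factorial : ℂ))⁻¹ •
            (∑ τ : Equiv.Perm (Fin m),
              (((List.ofFn fun i : Fin m => p (X (σ (τ i).succ))).foldr (· ∘ₗ ·) LinearMap.id)
                ∘ₗ p (X (σ 0))
              - p (X (σ 0)) ∘ₗ
                ((List.ofFn fun i : Fin m => p (X (σ (τ i).succ))).foldr (· ∘ₗ ·)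
                  LinearMap.id))) := by
      intro σ
      rw [hsym]
      rw [Finset.sum_sub_distrib]
      rw [smul_sub]
      congr 1
      · rw [LinearMap.smul_comp, sum_comp']
      · rw [LinearMap.comp_smul, comp_sum']
    calc ∑ σ : Equiv.Perm (Fin (m + 1)),
        ((symProd fun i => X (σ i.succ)) ∘ₗ p (X (σ 0))
          - p (X (σ 0)) ∘ₗ (symProd fun i => X (σ i.succ)))
        = ((m.factorial : ℂ))⁻¹ • ∑ σ : Equiv.Perm (Fin (m + 1)),
            ∑ τ : Equiv.Perm (Fin m),
              (((List.ofFn fun i : Fin m => p (X (σ (τ i).succ))).foldr (· ∘ₗ ·) LinearMap.id)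
                ∘ₗ p (X (σ 0))
              - p (X (σ 0)) ∘ₗ
                ((List.ofFn fun i : Fin m => p (X (σ (τ i).succ))).foldr (· ∘ₗ ·)
                  LinearMap.id)) := by
          rw [Finset.smul_sum]; exact Finset.sum_congr rfl fun σ _ => expand σ
      _ = 0 := by
          rw [Finset.sum_comm]
          have : ∀ τ : Equiv.Perm (Fin m),
              ∑ σ : Equiv.Perm (Fin (m + 1)),
                (((List.ofFn fun i : Fin m => p (X (σ (τ i).succ))).foldr (· ∘ₗ ·) LinearMap.id)
                  ∘ₗ p (X (σ 0))
                - p (X (σ 0)) ∘ₗ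
                  ((List.ofFn fun i : Fin m => p (X (σ (τ i).succ))).foldr (· ∘ₗ ·)
                    LinearMap.id)) = 0 := by
            intro τ
            rw [Finset.sum_sub_distrib, claim1 τ, claim2 τ, sub_self]
          simp [this]
  -- now the analytic part
  have hterm : ∀ σ : Equiv.Perm (Fin (m + 1)),
      nablaK (X (σ 0)) (fun i => X (σ i.succ))
      = μ * (⟪((symProd fun i => X (σ i.succ)) ∘ₗ p (X (σ 0))
              - p (X (σ 0)) ∘ₗ (symProd fun i => X (σ i.succ))) φ, ψ⟫).re := by
    intro σ
    rw [hleibniz]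
    have hadj : ⟪(symProd fun i => X (σ i.succ)) φ, p (X (σ 0)) ψ⟫
        = -⟪p (X (σ 0)) ((symProd fun i => X (σ i.succ)) φ), ψ⟫ := by
      rw [← LinearMap.adjoint_inner_left, hskew]
      simp
    rw [map_smul, inner_smul_left, inner_smul_right, hadj]
    simp only [LinearMap.sub_apply, LinearMap.comp_apply, inner_sub_left]
    have hre : ∀ z : ℂ, ((μ : ℂ) * z).re = μ * z.re := by
      intro z; simp [Complex.mul_re]
    rw [Complex.conj_ofReal, hre, hre]
    rw [Complex.sub_re, Complex.neg_re]
    ring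
  calc ∑ σ : Equiv.Perm (Fin (m + 1)), nablaK (X (σ 0)) (fun i => X (σ i.succ))
      = μ * (⟪(∑ σ : Equiv.Perm (Fin (m + 1)),
          ((symProd fun i => X (σ i.succ)) ∘ₗ p (X (σ 0))
            - p (X (σ 0)) ∘ₗ (symProd fun i => X (σ i.succ)))) φ, ψ⟫).re := by
        rw [LinearMap.sum_apply, sum_inner, Complex.re_sum, Finset.mul_sum]
        exact Finset.sum_congr rfl fun σ _ => hterm σ
    _ = 0 := by rw [hzero]; simp
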